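/- Let γ : [0,1] → ℝ^d be a path of bounded variation with length L, and let X^n(γ) = ∫_{0<u₁<⋯<uₙ<1} dγ(u₁) ⊗ ⋯ ⊗ dγ(uₙ) be the degree-n term of its signature. Then ‖X^n(γ)‖ ≤ L^n / n! for all n ≥ 0, where the norm on the tensor power is the projective norm. -/

import Mathlib

open scoped ENNReal Classical

/-- The approximation to the signature coefficient of the word `w` of the path
`γ : [s,t] → ℝ^d` given by the iterated Riemann–Stieltjes sum along the dyadic partition
of `[s,t]` of mesh `(t-s)/2^m`. -/
noncomputable def dyadicSigSum (d : ℕ) (γ : ℝ → PiLp 1 fun _ : Fin d => ℝ) (s t : ℝ)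
    {n : ℕ} (w : Fin n → Fin d) (m : ℕ) : ℝ :=
  ∑ j ∈ Finset.univ.filter (fun j : Fin n → Fin (2 ^ m) => StrictMono j),
    ∏ i : Fin n,
      (γ (s + (t - s) * ((j i : ℝ) + 1) / 2 ^ m) (w i) -
       γ (s + (t - s) * (j i : ℝ) / 2 ^ m) (w i))

/-- The signature coefficient `C_{s,t}(w) = ∫_{s<u₁<⋯<uₙ<t} dγ_{w₁}(u₁)⋯dγ_{wₙ}(uₙ)` of
the word `w`, defined as the limit of iterated Riemann–Stieltjes sums along dyadic
partitions (for continuous paths of bounded variation this limit exists and is the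
iterated integral over the simplex). -/
noncomputable def sigCoeff (d : ℕ) (γ : ℝ → PiLp 1 fun _ : Fin d => ℝ) (s t : ℝ)
    {n : ℕ} (w : Fin n → Fin d) : ℝ :=
  Filter.limUnder Filter.atTop (dyadicSigSum d γ s t w)

/-- The degree-`n` signature term `X^n_{s,t}(γ) ∈ (ℝ^d)^{⊗n}`, recorded by its coordinates
in the basis of words of length `n`, and normed with the `ℓ¹` norm of the coordinates:
for the `ℓ¹` norm on `ℝ^d` this is exactly the projective tensor norm on `(ℝ^d)^{⊗n}`. -/
noncomputable def sig (d : ℕ) (γ : ℝ → PiLp 1 fun _ : Fin d => ℝ) (s t : ℝ) (n : ℕ) :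
    PiLp 1 fun _ : Fin n → Fin d => ℝ :=
  WithLp.toLp 1 fun w => sigCoeff d γ s t w


open Finset



lemma norm_l1 {ι : Type*} [Fintype ι] (x : PiLp 1 fun _ : ι => ℝ) : ‖x‖ = ∑ i, |x i| := by
  simp [PiLp.norm_eq_of_L1]

lemma sum_dist_le {E' : Type*} [PseudoMetricSpace E'] (f : ℝ → E') {s : Set ℝ} {u : ℕ → ℝ}
    (hu : Monotone u) (hus : ∀ i, u i ∈ s) (N : ℕ) (hfin : eVariationOn f s ≠ ⊤) :
    ∑ i ∈ range N, dist (f (u (i+1))) (f (u i)) ≤ (eVariationOn f s).toReal := by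
  have h := eVariationOn.sum_le (f := f) (n := N) hu hus
  have h2 : ENNReal.ofReal (∑ i ∈ range N, dist (f (u (i+1))) (f (u i)))
      = ∑ i ∈ range N, edist (f (u (i+1))) (f (u i)) := by
    rw [ENNReal.ofReal_sum_of_nonneg (fun i _ => dist_nonneg)]
    exact Finset.sum_congr rfl fun i _ => (edist_dist _ _).symm
  rw [← ENNReal.ofReal_le_iff_le_toReal hfin, h2]
  exact h

set_option linter.deprecated false in
lemma strictMono_fin_self {k : ℕ} {f : Fin k → Fin k} (hf : StrictMono f) : f = id := by
  have hg : StrictMono (id : Fin k → Fin k) := strictMono_id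
  have hr : Set.range f = Set.range (id : Fin k → Fin k) := by
    have : Function.Surjective f := Finite.surjective_of_injective hf.injective
    simp [Set.range_eq_univ.2 this]
  exact (hf.range_inj hg).1 hr

lemma sum_injective_eq {N k : ℕ} (a : Fin N → ℝ) :
    ∑ j ∈ univ.filter (fun j : Fin k → Fin N => Function.Injective j), ∏ i, a (j i)
      = (k.factorial : ℝ) * ∑ j ∈ univ.filter (fun j : Fin k → Fin N => StrictMono j), ∏ i, a (j i) := by
  classical
  have key : ∑ p ∈ (univ : Finset (Equiv.Perm (Fin k))) ×ˢ
        (univ.filter (fun j : Fin k → Fin N => StrictMono j)), ∏ i, a (p.2 i)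
      = ∑ j ∈ univ.filter (fun j : Fin k → Fin N => Function.Injective j), ∏ i, a (j i) := by
    refine Finset.sum_bij' (fun p _ => p.2 ∘ p.1)
      (fun f _ => ((Tuple.sort f)⁻¹, f ∘ Tuple.sort f)) ?_ ?_ ?_ ?_ ?_
    · rintro ⟨σ, g⟩ hp
      simp only [mem_product, mem_filter, mem_univ, true_and] at hp ⊢
      exact hp.injective.comp σ.injective
    · intro f hf
      simp only [mem_filter, mem_univ, true_and] at hf
      simp only [mem_product, mem_filter, mem_univ, true_and]
      exact (Tuple.monotone_sort f).strictMono_of_injective (hf.comp (Tuple.sort f).injective)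
    · rintro ⟨σ, g⟩ hp
      simp only [mem_product, mem_filter, mem_univ, true_and] at hp
      have hmono : Monotone ((g ∘ σ) ∘ Tuple.sort (g ∘ σ)) := Tuple.monotone_sort _
      have hm : Monotone (σ ∘ (Tuple.sort (g ∘ σ)) : Fin k → Fin k) := by
        intro x y hxy
        have h3 := hmono hxy
        simpa using hp.le_iff_le.1 h3
      have hinj : Function.Injective (σ ∘ (Tuple.sort (g ∘ σ)) : Fin k → Fin k) :=
        σ.injective.comp (Tuple.sort (g ∘ σ)).injective
      have hid : (σ ∘ (Tuple.sort (g ∘ σ)) : Fin k → Fin k) = id :=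
        strictMono_fin_self (hm.strictMono_of_injective hinj)
      have hst : Tuple.sort (g ∘ σ) = σ⁻¹ := by
        refine Equiv.ext fun x => ?_
        have h4 := congrFun hid x
        simp only [Function.comp_apply, id_eq] at h4
        calc (Tuple.sort (g ∘ σ)) x = σ⁻¹ (σ ((Tuple.sort (g ∘ σ)) x)) := by simp
          _ = σ⁻¹ x := by rw [h4]
      simp only [hst]
      ext x
      · simp
      · simp
    · intro f hf
      funext x
      simp
    · rintro ⟨σ, g⟩ hp
      exact (Fintype.prod_equiv σ _ _ (fun i => rfl)).symm
  rw [← key, Finset.sum_product]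
  simp [Fintype.card_perm]



lemma comb {N k : ℕ} (a : Fin N → ℝ) (ha : ∀ p, 0 ≤ a p) :
    (k.factorial : ℝ) * ∑ j ∈ univ.filter (fun j : Fin k → Fin N => StrictMono j), ∏ i, a (j i)
      ≤ (∑ p, a p) ^ k := by
  rw [← sum_injective_eq]
  have h1 : ∑ j ∈ univ.filter (fun j : Fin k → Fin N => Function.Injective j), ∏ i, a (j i)
      ≤ ∑ j : Fin k → Fin N, ∏ i, a (j i) :=
    Finset.sum_le_sum_of_subset_of_nonneg (filter_subset _ _)
      (fun j _ _ => Finset.prod_nonneg fun i _ => ha _)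
  refine h1.trans_eq ?_
  rw [← Fintype.piFinset_univ, ← Finset.prod_univ_sum (fun _ => univ) (fun _ p => a p)]
  simp

noncomputable def ptd (m x : ℕ) : ℝ := (x : ℝ) / 2 ^ m

lemma dyadicSigSum_eq (d : ℕ) (γ : ℝ → PiLp 1 fun _ : Fin d => ℝ) {n : ℕ} (w : Fin n → Fin d)
    (m : ℕ) :
    dyadicSigSum d γ 0 1 w m = ∑ j ∈ univ.filter (fun j : Fin n → Fin (2^m) => StrictMono j),
      ∏ i, (γ (ptd m ((j i : ℕ)+1)) (w i) - γ (ptd m (j i)) (w i)) := by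
  unfold dyadicSigSum
  refine sum_congr rfl fun j _ => prod_congr rfl fun i _ => ?_
  have e1 : (0:ℝ) + (1 - 0) * ((j i : ℝ) + 1) / 2 ^ m = ptd m ((j i : ℕ) + 1) := by
    unfold ptd; push_cast; ring
  have e2 : (0:ℝ) + (1 - 0) * ((j i : ℝ)) / 2 ^ m = ptd m (j i) := by
    unfold ptd; push_cast; ring
  rw [e1, e2]

lemma ptd_mul (m e p : ℕ) : ptd (m+e) (p * 2^e) = ptd m p := by
  unfold ptd
  have h2 : (2:ℝ)^(m+e) = 2^m * 2^e := by rw [pow_add]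
  rw [h2]; push_cast
  rw [div_eq_div_iff (by positivity) (by positivity)]
  ring

lemma refine_eq (d : ℕ) (γ : ℝ → PiLp 1 fun _ : Fin d => ℝ) {n : ℕ} (w : Fin n → Fin d)
    (m e : ℕ) :
    dyadicSigSum d γ 0 1 w m
      = ∑ u ∈ univ.filter (fun u : Fin n → Fin (2^(m+e)) =>
            StrictMono (fun i => (u i : ℕ) / 2^e)),
          ∏ i, (γ (ptd (m+e) ((u i : ℕ)+1)) (w i) - γ (ptd (m+e) (u i)) (w i)) := by
  classical
  rw [dyadicSigSum_eq]
  have tele : ∀ (p : ℕ) (c : Fin d), γ (ptd m (p+1)) c - γ (ptd m p) c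
      = ∑ q ∈ range (2^e), (γ (ptd (m+e) (p * 2^e + q + 1)) c - γ (ptd (m+e) (p * 2^e + q)) c) := by
    intro p c
    have : ∀ q, p * 2^e + q + 1 = p * 2^e + (q+1) := fun q => by ring
    rw [Finset.sum_congr rfl (fun q _ => by rw [this q])]
    rw [Finset.sum_range_sub (fun q => γ (ptd (m+e) (p * 2^e + q)) c) (2^e)]
    have h1 : p * 2^e + 2^e = (p+1) * 2^e := by ring
    simp only [Nat.add_zero, h1, ptd_mul]
  have step2 : ∀ j : Fin n → Fin (2^m),
      (∏ i, (γ (ptd m ((j i : ℕ)+1)) (w i) - γ (ptd m (j i)) (w i)))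
      = ∑ x ∈ Fintype.piFinset (fun _ : Fin n => range (2^e)),
          ∏ i, (γ (ptd (m+e) ((j i : ℕ) * 2^e + x i + 1)) (w i)
                 - γ (ptd (m+e) ((j i : ℕ) * 2^e + x i)) (w i)) := by
    intro j
    calc (∏ i, (γ (ptd m ((j i : ℕ)+1)) (w i) - γ (ptd m (j i)) (w i)))
        = ∏ i, ∑ q ∈ range (2^e), (γ (ptd (m+e) ((j i : ℕ) * 2^e + q + 1)) (w i)
            - γ (ptd (m+e) ((j i : ℕ) * 2^e + q)) (w i)) :=
          prod_congr rfl fun i _ => tele (j i) (w i)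
      _ = _ := Finset.prod_univ_sum _ _
  rw [Finset.sum_congr rfl (fun j _ => step2 j), ← Finset.sum_product']
  have h2e : (0:ℕ) < 2^e := Nat.pow_pos (by norm_num)
  have hlt : ∀ (j : Fin (2^m)) (q : ℕ), q < 2^e → (j : ℕ) * 2^e + q < 2^(m+e) := by
    intro j q hq
    calc (j:ℕ) * 2^e + q < ((j:ℕ)+1) * 2^e := by nlinarith
    _ ≤ 2^m * 2^e := Nat.mul_le_mul_right _ j.2
    _ = 2^(m+e) := (pow_add 2 m e).symm
  refine Finset.sum_bij' (i := fun p hp => fun i : Fin n => (⟨(p.1 i : ℕ) * 2^e + p.2 i, ?_⟩ : Fin (2^(m+e))))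
    (j := fun u hu => (fun i => (⟨(u i : ℕ) / 2^e, ?_⟩ : Fin (2^m)), fun i => (u i : ℕ) % 2^e))
    ?_ ?_ ?_ ?_ ?_
  · simp only [mem_product, mem_filter, mem_univ, true_and, Fintype.mem_piFinset, mem_range] at hp
    exact hlt _ _ (hp.2 i)
  · rw [Nat.div_lt_iff_lt_mul h2e, ← pow_add]
    exact (u i).2
  · rintro ⟨j, x⟩ hp
    simp only [mem_product, mem_filter, mem_univ, true_and, Fintype.mem_piFinset, mem_range] at hp
    simp only [mem_filter, mem_univ, true_and]
    have hdiv : ∀ i, ((j i : ℕ) * 2^e + x i) / 2^e = (j i : ℕ) := by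
      intro i
      rw [mul_comm, Nat.mul_add_div h2e, Nat.div_eq_of_lt (hp.2 i), add_zero]
    simp only [hdiv]
    exact Fin.val_strictMono.comp hp.1
  · intro u hu
    simp only [mem_filter, mem_univ, true_and] at hu
    simp only [mem_product, mem_filter, mem_univ, true_and, Fintype.mem_piFinset, mem_range]
    constructor
    · intro x y hxy
      exact Fin.mk_lt_mk.2 (hu hxy)
    · exact fun i => Nat.mod_lt _ h2e
  · rintro ⟨j, x⟩ hp
    simp only [mem_product, mem_filter, mem_univ, true_and, Fintype.mem_piFinset, mem_range] at hp
    have hdiv : ∀ i, ((j i : ℕ) * 2^e + x i) / 2^e = (j i : ℕ) := by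
      intro i
      rw [mul_comm, Nat.mul_add_div h2e, Nat.div_eq_of_lt (hp.2 i), add_zero]
    have hmod : ∀ i, ((j i : ℕ) * 2^e + x i) % 2^e = x i := by
      intro i
      rw [mul_comm, Nat.mul_add_mod, Nat.mod_eq_of_lt (hp.2 i)]
    ext i
    · simp [hdiv]
    · simp [hmod]
  · intro u hu
    funext i
    exact Fin.ext (Nat.div_add_mod' _ _)
  · rintro ⟨j, x⟩ hp
    rfl

lemma diff_eq (d : ℕ) (γ : ℝ → PiLp 1 fun _ : Fin d => ℝ) {n : ℕ} (w : Fin n → Fin d)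
    (m e : ℕ) :
    dyadicSigSum d γ 0 1 w (m+e) - dyadicSigSum d γ 0 1 w m
      = ∑ u ∈ univ.filter (fun u : Fin n → Fin (2^(m+e)) =>
            StrictMono u ∧ ¬ StrictMono (fun i => (u i : ℕ) / 2^e)),
          ∏ i, (γ (ptd (m+e) ((u i : ℕ)+1)) (w i) - γ (ptd (m+e) (u i)) (w i)) := by
  classical
  rw [dyadicSigSum_eq d γ w (m+e), refine_eq d γ w m e]
  have himp : ∀ u : Fin n → Fin (2^(m+e)), StrictMono (fun i => (u i : ℕ) / 2^e) → StrictMono u := by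
    intro u h x y hxy
    have := h hxy
    have h2 : (u x : ℕ) < u y := Nat.lt_of_div_lt_div this
    exact h2
  have hsplit := Finset.sum_filter_add_sum_filter_not
    (univ.filter (fun u : Fin n → Fin (2^(m+e)) => StrictMono u))
    (fun u => StrictMono (fun i => (u i : ℕ) / 2^e))
    (fun u => ∏ i, (γ (ptd (m+e) ((u i : ℕ)+1)) (w i) - γ (ptd (m+e) (u i)) (w i)))
  rw [Finset.filter_filter, Finset.filter_filter] at hsplit
  have hfe : univ.filter (fun u : Fin n → Fin (2^(m+e)) =>
      StrictMono u ∧ StrictMono (fun i => (u i : ℕ) / 2^e))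
      = univ.filter (fun u : Fin n → Fin (2^(m+e)) => StrictMono (fun i => (u i : ℕ) / 2^e)) := by
    refine Finset.filter_congr fun u _ => ?_
    exact ⟨fun h => h.2, fun h => ⟨himp u h, h⟩⟩
  rw [hfe] at hsplit
  linarith [hsplit]

noncomputable def nrm (d : ℕ) (γ : ℝ → PiLp 1 fun _ : Fin d => ℝ) (F p : ℕ) : ℝ :=
  dist (γ (ptd F (p+1))) (γ (ptd F p))

lemma nrm_nonneg (d γ F p) : 0 ≤ nrm d γ F p := dist_nonneg

lemma sum_coords (d : ℕ) (a b : PiLp 1 fun _ : Fin d => ℝ) :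
    ∑ k, |a k - b k| = dist a b := by
  rw [dist_eq_norm, norm_l1]
  exact Finset.sum_congr rfl fun i _ => by simp [PiLp.sub_apply]

set_option maxHeartbeats 1000000 in
lemma abs_sum_words_le (d : ℕ) (γ : ℝ → PiLp 1 fun _ : Fin d => ℝ) (n F : ℕ)
    (B : Finset (Fin n → Fin (2^F))) :
    ∑ w : Fin n → Fin d,
        |∑ u ∈ B, ∏ i, (γ (ptd F ((u i : ℕ)+1)) (w i) - γ (ptd F (u i)) (w i))|
      ≤ ∑ u ∈ B, ∏ i, nrm d γ F (u i) := by
  classical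
  have h1 : ∀ w : Fin n → Fin d,
      |∑ u ∈ B, ∏ i, (γ (ptd F ((u i : ℕ)+1)) (w i) - γ (ptd F (u i)) (w i))|
        ≤ ∑ u ∈ B, ∏ i, |γ (ptd F ((u i : ℕ)+1)) (w i) - γ (ptd F (u i)) (w i)| := by
    intro w
    refine (Finset.abs_sum_le_sum_abs _ _).trans ?_
    exact Finset.sum_le_sum fun u _ => le_of_eq (Finset.abs_prod _ _)
  refine (Finset.sum_le_sum fun w _ => h1 w).trans ?_
  rw [Finset.sum_comm]
  refine Finset.sum_le_sum fun u _ => le_of_eq ?_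
  have h2 : ∀ w : Fin n → Fin d, ∏ i, |γ (ptd F ((u i : ℕ)+1)) (w i) - γ (ptd F (u i)) (w i)|
      = ∏ i, (fun (i : Fin n) (k : Fin d) => |γ (ptd F ((u i : ℕ)+1)) k - γ (ptd F (u i)) k|) i (w i) :=
    fun w => rfl
  calc ∑ w : Fin n → Fin d, ∏ i, |γ (ptd F ((u i : ℕ)+1)) (w i) - γ (ptd F (u i)) (w i)|
      = ∑ w ∈ Fintype.piFinset (fun _ : Fin n => (univ : Finset (Fin d))),
          ∏ i, (fun (i : Fin n) (k : Fin d) => |γ (ptd F ((u i : ℕ)+1)) k - γ (ptd F (u i)) k|) i (w i) := by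
        rw [Fintype.piFinset_univ]
    _ = ∏ i, ∑ k ∈ (univ : Finset (Fin d)),
          (fun (i : Fin n) (k : Fin d) => |γ (ptd F ((u i : ℕ)+1)) k - γ (ptd F (u i)) k|) i k :=
        (Finset.prod_univ_sum (fun _ : Fin n => (univ : Finset (Fin d)))
          (fun (i : Fin n) (k : Fin d) => |γ (ptd F ((u i : ℕ)+1)) k - γ (ptd F (u i)) k|)).symm
    _ = ∏ i, nrm d γ F (u i) := by
        refine prod_congr rfl fun i _ => ?_
        simp only
        rw [sum_coords d (γ (ptd F ((u i : ℕ)+1))) (γ (ptd F (u i)))]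
        rfl



lemma bad_sum_le {M' : ℕ} (a : Fin M' → ℝ) (ha : ∀ p, 0 ≤ a p) (blk : Fin M' → ℕ)
    (hblk : Monotone blk) {k : ℕ} {ε : ℝ} (hε : 0 ≤ ε)
    (hblock : ∀ x : Fin M', ∑ y ∈ univ.filter (fun y => blk y = blk x), a y ≤ ε) :
    ∑ u ∈ univ.filter (fun u : Fin (k+2) → Fin M' =>
        StrictMono u ∧ ¬ StrictMono (fun i => blk (u i))), ∏ i, a (u i)
      ≤ (k+1) * ε *
        ∑ v ∈ univ.filter (fun v : Fin (k+1) → Fin M' => StrictMono v), ∏ i, a (v i) := by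
  classical
  set f : (Fin (k+2) → Fin M') → ℝ := fun u => ∏ i, a (u i) with hf
  have hfnn : ∀ u, 0 ≤ f u := fun u => Finset.prod_nonneg fun i _ => ha _
  set bad := univ.filter (fun u : Fin (k+2) → Fin M' =>
      StrictMono u ∧ ¬ StrictMono (fun i => blk (u i))) with hbad
  set Bi : Fin (k+1) → Finset (Fin (k+2) → Fin M') := fun i =>
      univ.filter (fun u => StrictMono u ∧ blk (u i.castSucc) = blk (u i.succ)) with hBi
  -- step A
  have hexists : ∀ u ∈ bad, ∃ i : Fin (k+1), blk (u i.castSucc) = blk (u i.succ) := by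
    intro u hu
    rw [hbad, mem_filter] at hu
    obtain ⟨-, hsm, hnsm⟩ := hu
    by_contra hcon
    push_neg at hcon
    apply hnsm
    rw [Fin.strictMono_iff_lt_succ]
    intro i
    have hle : blk (u i.castSucc) ≤ blk (u i.succ) :=
      hblk (hsm (Fin.castSucc_lt_succ (i := i))).le
    exact lt_of_le_of_ne hle (hcon i)
  have stepA : ∑ u ∈ bad, f u ≤ ∑ i : Fin (k+1), ∑ u ∈ Bi i, f u := by
    have h1 : ∀ u ∈ bad, f u ≤ ∑ i : Fin (k+1),
        (if blk (u i.castSucc) = blk (u i.succ) then f u else 0) := by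
      intro u hu
      obtain ⟨i, hi⟩ := hexists u hu
      calc f u = (if blk (u i.castSucc) = blk (u i.succ) then f u else 0) := by simp [hi]
        _ ≤ ∑ i : Fin (k+1), (if blk (u i.castSucc) = blk (u i.succ) then f u else 0) :=
          Finset.single_le_sum (f := fun i : Fin (k+1) =>
            (if blk (u i.castSucc) = blk (u i.succ) then f u else 0))
            (fun j _ => by split_ifs; exacts [hfnn u, le_rfl]) (mem_univ i)
    refine (Finset.sum_le_sum h1).trans ?_
    rw [Finset.sum_comm]
    refine Finset.sum_le_sum fun i _ => ?_
    rw [← Finset.sum_filter]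
    refine Finset.sum_le_sum_of_subset_of_nonneg ?_ (fun u _ _ => hfnn u)
    intro u hu
    rw [Finset.mem_filter] at hu
    rw [hBi, Finset.mem_filter]
    have hub := hu.1
    rw [hbad, Finset.mem_filter] at hub
    exact ⟨mem_univ _, hub.2.1, hu.2⟩
  refine stepA.trans ?_
  -- step B
  have stepB : ∀ i : Fin (k+1), ∑ u ∈ Bi i, f u
      ≤ ε * ∑ v ∈ univ.filter (fun v : Fin (k+1) → Fin M' => StrictMono v), ∏ t, a (v t) := by
    intro i
    set Φ : (Fin (k+2) → Fin M') → (Fin (k+1) → Fin M') :=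
      fun u => fun t => u (i.succ.succAbove t) with hΦ
    have hmaps : ∀ u ∈ Bi i, Φ u ∈ univ.filter (fun v : Fin (k+1) → Fin M' => StrictMono v) := by
      intro u hu
      rw [hBi, mem_filter] at hu
      rw [mem_filter]
      exact ⟨mem_univ _, hu.2.1.comp (Fin.strictMono_succAbove i.succ)⟩
    rw [← Finset.sum_fiberwise_of_maps_to hmaps f]
    rw [Finset.mul_sum]
    refine Finset.sum_le_sum fun v hv => ?_
    -- inner fiber
    have hvin : ∀ u ∈ (Bi i).filter (fun u => Φ u = v), f u = a (u i.succ) * ∏ t, a (v t) := by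
      intro u hu
      rw [mem_filter] at hu
      show ∏ t : Fin (k+2), a (u t) = _
      refine (Fin.prod_univ_succAbove (fun t : Fin (k+2) => a (u t)) i.succ).trans ?_
      congr 1
      refine Finset.prod_congr rfl fun t _ => ?_
      exact congrArg a (congrFun hu.2 t)
    rw [Finset.sum_congr rfl hvin, ← Finset.sum_mul]
    have hvnn : 0 ≤ ∏ t, a (v t) := Finset.prod_nonneg fun t _ => ha _
    refine mul_le_mul_of_nonneg_right ?_ hvnn
    -- ∑ u in fiber, a (u i.succ) ≤ ε
    have hcast : i.succ.succAbove i = i.castSucc :=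
      Fin.succAbove_of_castSucc_lt _ _ (Fin.castSucc_lt_succ (i := i))
    have hinj : ∀ u ∈ (Bi i).filter (fun u => Φ u = v), ∀ u' ∈ (Bi i).filter (fun u => Φ u = v),
        u i.succ = u' i.succ → u = u' := by
      intro u hu u' hu' heq
      rw [mem_filter] at hu hu'
      funext t
      by_cases ht : t = i.succ
      · rw [ht]; exact heq
      · obtain ⟨t', ht'⟩ := Fin.exists_succAbove_eq ht
        rw [← ht']
        have e1 : u (i.succ.succAbove t') = Φ u t' := rfl
        have e2 : u' (i.succ.succAbove t') = Φ u' t' := rfl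
        rw [e1, e2, hu.2, hu'.2]
    calc ∑ u ∈ (Bi i).filter (fun u => Φ u = v), a (u i.succ)
        = ∑ y ∈ ((Bi i).filter (fun u => Φ u = v)).image (fun u => u i.succ), a y :=
          (Finset.sum_image hinj).symm
      _ ≤ ∑ y ∈ univ.filter (fun y => blk y = blk (v i)), a y := by
          refine Finset.sum_le_sum_of_subset_of_nonneg ?_ (fun y _ _ => ha y)
          intro y hy
          rw [Finset.mem_image] at hy
          obtain ⟨u, hu, rfl⟩ := hy
          rw [mem_filter] at hu
          have hu1 := hu.1
          rw [hBi, mem_filter] at hu1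
          rw [mem_filter]
          refine ⟨mem_univ _, ?_⟩
          have : v i = u i.castSucc := by rw [← hu.2]; show u (i.succ.succAbove i) = _; rw [hcast]
          rw [this]
          exact hu1.2.2.symm
      _ ≤ ε := hblock (v i)
  calc ∑ i : Fin (k+1), ∑ u ∈ Bi i, f u
      ≤ ∑ _i : Fin (k+1), ε * ∑ v ∈ univ.filter (fun v : Fin (k+1) → Fin M' => StrictMono v),
          ∏ t, a (v t) := Finset.sum_le_sum fun i _ => stepB i
    _ = (k+1) * ε * ∑ v ∈ univ.filter (fun v : Fin (k+1) → Fin M' => StrictMono v), ∏ t, a (v t) := by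
        rw [Finset.sum_const]
        simp [mul_assoc]

lemma exists_partition {E' : Type*} [PseudoMetricSpace E'] (f : ℝ → E') {s : Set ℝ}
    (hfin : eVariationOn f s ≠ ⊤) (hne : s.Nonempty) {η : ℝ} (hη : 0 < η) :
    ∃ (N : ℕ) (u : ℕ → ℝ), Monotone u ∧ (∀ i, u i ∈ s) ∧
      (eVariationOn f s).toReal - η ≤ ∑ i ∈ Finset.range N, dist (f (u (i+1))) (f (u i)) := by
  by_cases hV : (eVariationOn f s).toReal ≤ η
  · obtain ⟨x, hx⟩ := hne
    refine ⟨0, fun _ => x, monotone_const, fun _ => hx, by simp; linarith⟩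
  · push_neg at hV
    have htr : 0 ≤ (eVariationOn f s).toReal := ENNReal.toReal_nonneg
    have h1 : ENNReal.ofReal ((eVariationOn f s).toReal - η) < eVariationOn f s := by
      conv_rhs => rw [← ENNReal.ofReal_toReal hfin]
      exact (ENNReal.ofReal_lt_ofReal_iff_of_nonneg (by linarith)).2 (by linarith)
    have h1' : ENNReal.ofReal ((eVariationOn f s).toReal - η)
        < ⨆ p : ℕ × { u : ℕ → ℝ // Monotone u ∧ ∀ i, u i ∈ s },
            ∑ i ∈ Finset.range p.1, edist (f (p.2.1 (i + 1))) (f (p.2.1 i)) := h1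
    obtain ⟨p, hp⟩ := lt_iSup_iff.1 h1'
    refine ⟨p.1, p.2.1, p.2.2.1, p.2.2.2, ?_⟩
    have h2 : ∑ i ∈ Finset.range p.1, edist (f (p.2.1 (i+1))) (f (p.2.1 i))
        = ENNReal.ofReal (∑ i ∈ Finset.range p.1, dist (f (p.2.1 (i+1))) (f (p.2.1 i))) := by
      rw [ENNReal.ofReal_sum_of_nonneg (fun i _ => dist_nonneg)]
      exact Finset.sum_congr rfl fun i _ => edist_dist _ _
    rw [h2] at hp
    exact ((ENNReal.ofReal_lt_ofReal_iff_of_nonneg (by linarith)).1 hp).le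

lemma right_small {E' : Type*} [PseudoMetricSpace E'] {γ : ℝ → E'}
    (hcont : ContinuousOn γ (Set.Icc 0 1)) (hfin : eVariationOn γ (Set.Icc 0 1) ≠ ⊤)
    {c : ℝ} (hc0 : 0 ≤ c) (hc1 : c < 1) {ε : ℝ} (hε : 0 < ε) :
    ∃ b, c < b ∧ b ≤ 1 ∧ (eVariationOn γ (Set.Icc 0 1 ∩ Set.Icc c b)).toReal ≤ ε := by
  classical
  set I : Set ℝ := Set.Icc 0 1 with hI
  have hcI : c ∈ I := ⟨hc0, hc1.le⟩
  set s₁ : Set ℝ := I ∩ Set.Icc c 1 with hs₁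
  have hsub : s₁ ⊆ I := Set.inter_subset_left
  have hfin1 : eVariationOn γ s₁ ≠ ⊤ := ne_top_of_le_ne_top hfin (eVariationOn.mono γ hsub)
  have hne : s₁.Nonempty := ⟨c, hcI, le_refl c, hc1.le⟩
  obtain ⟨N, u0, hu0m, hu0s, hP0⟩ := exists_partition γ hfin1 hne (η := ε/4) (by linarith)
  set w : ℕ → ℝ := fun i => if i = 0 then c else u0 (i - 1) with hw
  have hwge : ∀ i, c ≤ w i := by
    intro i
    by_cases h : i = 0
    · simp [hw, h]
    · simpa [hw, h] using (hu0s (i-1)).2.1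
  have hws : ∀ i, w i ∈ s₁ := by
    intro i
    by_cases h : i = 0
    · simpa [hw, h] using ⟨hcI, le_refl c, hc1.le⟩
    · simpa [hw, h] using hu0s (i-1)
  have hwm : Monotone w := by
    intro x y hxy
    by_cases hx : x = 0
    · rw [hx]
      simpa [hw] using hwge y
    · have hy : y ≠ 0 := fun h => hx (Nat.le_zero.1 (h ▸ hxy))
      simp only [hw, if_neg hx, if_neg hy]
      exact hu0m (Nat.sub_le_sub_right hxy 1)
  set Q : ℝ := ∑ i ∈ range (N+1), dist (γ (w (i+1))) (γ (w i)) with hQdef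
  have hQ : (eVariationOn γ s₁).toReal - ε/4 ≤ Q := by
    have hsplit : Q = (∑ i ∈ range N, dist (γ (w (i+2))) (γ (w (i+1)))) + dist (γ (w 1)) (γ (w 0)) := by
      rw [hQdef, Finset.sum_range_succ' (fun i => dist (γ (w (i+1))) (γ (w i))) N]
    have hterm : ∀ i, dist (γ (w (i+2))) (γ (w (i+1))) = dist (γ (u0 (i+1))) (γ (u0 i)) := by
      intro i
      simp [hw]
    rw [hsplit, Finset.sum_congr rfl (fun i _ => hterm i)]
    have := dist_nonneg (x := γ (w 1)) (y := γ (w 0))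
    linarith
  set S : Finset ℕ := (Finset.range (N+2)).filter (fun i => c < w i) with hS
  by_cases hSne : S.Nonempty
  · -- main case
    set i₁ : ℕ := S.min' hSne with hi₁
    have hi₁S : i₁ ∈ S := S.min'_mem hSne
    set μ : ℝ := w i₁ with hμ
    have hμc : c < μ := (Finset.mem_filter.1 hi₁S).2
    have hμ1 : μ ≤ 1 := (hws i₁).1.2
    have hi₁N : i₁ < N + 2 := Finset.mem_range.1 (Finset.mem_filter.1 hi₁S).1
    have hpoints : ∀ i, w i = c ∨ μ ≤ w i := by
      intro i
      rcases lt_or_ge c (w i) with h | h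
      · right
        rcases le_or_gt i₁ i with h2 | h2
        · exact hwm h2
        · exfalso
          have : i ∈ S := Finset.mem_filter.2 ⟨Finset.mem_range.2 (h2.trans hi₁N), h⟩
          exact absurd (S.min'_le i this) (not_le.2 h2)
      · left; exact le_antisymm h (hwge i)
    obtain ⟨δ, hδ0, hδ⟩ := Metric.continuousWithinAt_iff.1 (hcont c hcI) (ε/4) (by linarith)
    set b : ℝ := min μ (c + δ/2) with hb
    have hcb : c < b := lt_min hμc (by linarith)
    have hb1 : b ≤ 1 := le_trans (min_le_left _ _) hμ1
    have hbI : b ∈ I := ⟨by linarith, hb1⟩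
    have hdistb : dist (γ b) (γ c) < ε/4 := by
      apply hδ hbI
      rw [Real.dist_eq, abs_of_nonneg (by linarith)]
      have : b ≤ c + δ/2 := min_le_right _ _
      linarith
    set v : ℕ → ℝ := fun i => max b (w i) with hv
    have hvm : Monotone v := fun x y hxy => max_le_max (le_refl b) (hwm hxy)
    have hvs : ∀ i, v i ∈ I ∩ Set.Icc b 1 := by
      intro i
      refine ⟨⟨le_trans hbI.1 (le_max_left _ _), max_le hb1 (hws i).1.2⟩,
        le_max_left _ _, max_le hb1 (hws i).1.2⟩
    have hfin2 : eVariationOn γ (I ∩ Set.Icc b 1) ≠ ⊤ :=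
      ne_top_of_le_ne_top hfin (eVariationOn.mono γ Set.inter_subset_left)
    have hR : ∑ i ∈ range (N+1), dist (γ (v (i+1))) (γ (v i))
        ≤ (eVariationOn γ (I ∩ Set.Icc b 1)).toReal := sum_dist_le γ hvm hvs (N+1) hfin2
    have hperterm : ∀ i, dist (γ (w (i+1))) (γ (w i))
        ≤ dist (γ (v (i+1))) (γ (v i))
          + (if w i = c ∧ c < w (i+1) then dist (γ b) (γ c) else 0) := by
      intro i
      rcases hpoints i with hwi | hwi
      · rcases hpoints (i+1) with hwi1 | hwi1
        · have h0 : dist (γ (w (i+1))) (γ (w i)) = 0 := by rw [hwi, hwi1]; simp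
          rw [h0]
          have : (0:ℝ) ≤ if w i = c ∧ c < w (i+1) then dist (γ b) (γ c) else 0 := by
            split_ifs; exacts [dist_nonneg, le_rfl]
          have := dist_nonneg (x := γ (v (i+1))) (y := γ (v i))
          positivity
        · have hbw : b ≤ w (i+1) := le_trans (min_le_left _ _) hwi1
          have hv1 : v (i+1) = w (i+1) := max_eq_right hbw
          have hvi : v i = b := by
            show b ⊔ w i = b
            rw [hwi]
            exact max_eq_left hcb.le
          rw [if_pos ⟨hwi, lt_of_lt_of_le hμc hwi1⟩, hv1, hvi, hwi]
          exact dist_triangle _ _ _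
      · have hbwi : b ≤ w i := le_trans (min_le_left _ _) hwi
        have hbw1 : b ≤ w (i+1) := le_trans hbwi (hwm (Nat.le_succ i))
        have hne : ¬ (w i = c ∧ c < w (i+1)) := by
          rintro ⟨h1, -⟩
          rw [h1] at hwi
          exact absurd hwi (not_le.2 hμc)
        have hvi : v i = w i := max_eq_right hbwi
        have hv1 : v (i+1) = w (i+1) := max_eq_right hbw1
        rw [if_neg hne, add_zero, hvi, hv1]
    set C : Finset ℕ := (range (N+1)).filter (fun i => w i = c ∧ c < w (i+1)) with hC
    have hCcard : C.card ≤ 1 := by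
      rw [Finset.card_le_one]
      intro i hi j hj
      rw [hC, Finset.mem_filter] at hi hj
      by_contra hij
      rcases lt_or_gt_of_ne hij with h | h
      · have : w (i+1) ≤ w j := hwm h
        rw [hj.2.1] at this
        exact absurd (lt_of_lt_of_le hi.2.2 this) (lt_irrefl c)
      · have : w (j+1) ≤ w i := hwm h
        rw [hi.2.1] at this
        exact absurd (lt_of_lt_of_le hj.2.2 this) (lt_irrefl c)
    have hQle : Q ≤ (eVariationOn γ (I ∩ Set.Icc b 1)).toReal + ε/4 := by
      have h1 : Q ≤ (∑ i ∈ range (N+1), dist (γ (v (i+1))) (γ (v i)))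
          + ∑ i ∈ range (N+1), (if w i = c ∧ c < w (i+1) then dist (γ b) (γ c) else 0) := by
        rw [hQdef, ← Finset.sum_add_distrib]
        exact Finset.sum_le_sum fun i _ => hperterm i
      have h2 : ∑ i ∈ range (N+1), (if w i = c ∧ c < w (i+1) then dist (γ b) (γ c) else 0)
          = ∑ _i ∈ C, dist (γ b) (γ c) := (Finset.sum_filter _ _).symm
      have h3 : ∑ _i ∈ C, dist (γ b) (γ c) ≤ ε/4 := by
        rw [Finset.sum_const, nsmul_eq_mul]
        calc (C.card : ℝ) * dist (γ b) (γ c) ≤ 1 * (ε/4) :=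
            mul_le_mul (by exact_mod_cast hCcard) hdistb.le dist_nonneg zero_le_one
          _ = ε/4 := one_mul _
      rw [h2] at h1
      linarith [hR]
    -- additivity
    have hadd := eVariationOn.Icc_add_Icc γ (le_of_lt hcb) hb1 hbI
    have hfc : eVariationOn γ (I ∩ Set.Icc c b) ≠ ⊤ :=
      ne_top_of_le_ne_top hfin (eVariationOn.mono γ Set.inter_subset_left)
    have htr : (eVariationOn γ (I ∩ Set.Icc c b)).toReal
        + (eVariationOn γ (I ∩ Set.Icc b 1)).toReal = (eVariationOn γ s₁).toReal := by
      rw [hs₁, ← hadd, ENNReal.toReal_add hfc hfin2]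
    refine ⟨b, hcb, hb1, ?_⟩
    linarith
  · -- degenerate: all points equal c
    have hall : ∀ i < N + 2, w i = c := by
      intro i hi
      have : ¬ c < w i := fun h => hSne ⟨i, Finset.mem_filter.2 ⟨Finset.mem_range.2 hi, h⟩⟩
      exact le_antisymm (not_lt.1 this) (hwge i)
    have hQ0 : Q = 0 := by
      rw [hQdef]
      refine Finset.sum_eq_zero fun i hi => ?_
      have hi' := Finset.mem_range.1 hi
      rw [hall i (by omega), hall (i+1) (by omega)]
      simp
    refine ⟨1, hc1, le_rfl, ?_⟩
    show (eVariationOn γ s₁).toReal ≤ ε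
    rw [hQ0] at hQ
    linarith

lemma left_small {E' : Type*} [PseudoMetricSpace E'] {γ : ℝ → E'}
    (hcont : ContinuousOn γ (Set.Icc 0 1)) (hfin : eVariationOn γ (Set.Icc 0 1) ≠ ⊤)
    {c : ℝ} (hc0 : 0 < c) (hc1 : c ≤ 1) {ε : ℝ} (hε : 0 < ε) :
    ∃ a, a < c ∧ 0 ≤ a ∧ (eVariationOn γ (Set.Icc 0 1 ∩ Set.Icc a c)).toReal ≤ ε := by
  classical
  set I : Set ℝ := Set.Icc 0 1 with hI
  have hcI : c ∈ I := ⟨hc0.le, hc1⟩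
  set s₁ : Set ℝ := I ∩ Set.Icc 0 c with hs₁
  have hsub : s₁ ⊆ I := Set.inter_subset_left
  have hfin1 : eVariationOn γ s₁ ≠ ⊤ := ne_top_of_le_ne_top hfin (eVariationOn.mono γ hsub)
  have hne : s₁.Nonempty := ⟨c, hcI, hc0.le, le_refl c⟩
  obtain ⟨N, u0, hu0m, hu0s, hP0⟩ := exists_partition γ hfin1 hne (η := ε/4) (by linarith)
  set w : ℕ → ℝ := fun i => if i ≤ N then u0 i else c with hw
  have hwle : ∀ i, w i ≤ c := by
    intro i
    by_cases h : i ≤ N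
    · simpa [hw, h] using (hu0s i).2.2
    · simp [hw, h]
  have hws : ∀ i, w i ∈ s₁ := by
    intro i
    by_cases h : i ≤ N
    · simpa [hw, h] using hu0s i
    · simpa [hw, h] using ⟨hcI, hc0.le, le_refl c⟩
  have hwm : Monotone w := by
    intro x y hxy
    by_cases hy : y ≤ N
    · have hx : x ≤ N := hxy.trans hy
      simp only [hw, if_pos hx, if_pos hy]
      exact hu0m hxy
    · by_cases hx : x ≤ N
      · simp only [hw, if_pos hx, if_neg hy]
        exact (hu0s x).2.2
      · simp [hw, hx, hy]
  set Q : ℝ := ∑ i ∈ range (N+1), dist (γ (w (i+1))) (γ (w i)) with hQdef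
  have hQ : (eVariationOn γ s₁).toReal - ε/4 ≤ Q := by
    have hsplit : Q = (∑ i ∈ range N, dist (γ (w (i+1))) (γ (w i)))
        + dist (γ (w (N+1))) (γ (w N)) := by
      rw [hQdef, Finset.sum_range_succ]
    have hterm : ∀ i ∈ range N, dist (γ (w (i+1))) (γ (w i)) = dist (γ (u0 (i+1))) (γ (u0 i)) := by
      intro i hi
      have hi' := Finset.mem_range.1 hi
      have h1 : i + 1 ≤ N := hi'
      simp [hw, h1, h1.trans (Nat.le_succ N), Nat.le_of_succ_le h1]
    rw [hsplit, Finset.sum_congr rfl hterm]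
    have := dist_nonneg (x := γ (w (N+1))) (y := γ (w N))
    linarith
  set S : Finset ℕ := (Finset.range (N+2)).filter (fun i => w i < c) with hS
  by_cases hSne : S.Nonempty
  · set i₁ : ℕ := S.max' hSne with hi₁
    have hi₁S : i₁ ∈ S := S.max'_mem hSne
    set μ : ℝ := w i₁ with hμ
    have hμc : μ < c := (Finset.mem_filter.1 hi₁S).2
    have hμ0 : 0 ≤ μ := (hws i₁).1.1
    have hpoints : ∀ i, w i = c ∨ w i ≤ μ := by
      intro i
      rcases lt_or_ge (w i) c with h | h
      · right
        have hiN : i ≤ N := by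
          by_contra hiN
          have : w i = c := by simp [hw, hiN]
          exact absurd this (ne_of_lt h)
        have hiS : i ∈ S := Finset.mem_filter.2 ⟨Finset.mem_range.2 (by omega), h⟩
        exact hwm (S.le_max' i hiS)
      · left; exact le_antisymm (hwle i) h
    obtain ⟨δ, hδ0, hδ⟩ := Metric.continuousWithinAt_iff.1 (hcont c hcI) (ε/4) (by linarith)
    set a : ℝ := max μ (c - δ/2) with ha
    have hac : a < c := max_lt hμc (by linarith)
    have ha0 : 0 ≤ a := le_trans hμ0 (le_max_left _ _)
    have haI : a ∈ I := ⟨ha0, hac.le.trans hc1⟩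
    have hdista : dist (γ a) (γ c) < ε/4 := by
      apply hδ haI
      rw [Real.dist_eq, abs_of_nonpos (by linarith)]
      have : c - δ/2 ≤ a := le_max_right _ _
      linarith
    set v : ℕ → ℝ := fun i => min a (w i) with hv
    have hvm : Monotone v := fun x y hxy => min_le_min (le_refl a) (hwm hxy)
    have hvs : ∀ i, v i ∈ I ∩ Set.Icc 0 a := by
      intro i
      refine ⟨⟨le_min ha0 (hws i).1.1, (min_le_left _ _).trans haI.2⟩,
        le_min ha0 (hws i).1.1, min_le_left _ _⟩
    have hfin2 : eVariationOn γ (I ∩ Set.Icc 0 a) ≠ ⊤ :=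
      ne_top_of_le_ne_top hfin (eVariationOn.mono γ Set.inter_subset_left)
    have hR : ∑ i ∈ range (N+1), dist (γ (v (i+1))) (γ (v i))
        ≤ (eVariationOn γ (I ∩ Set.Icc 0 a)).toReal := sum_dist_le γ hvm hvs (N+1) hfin2
    have hperterm : ∀ i, dist (γ (w (i+1))) (γ (w i))
        ≤ dist (γ (v (i+1))) (γ (v i))
          + (if w (i+1) = c ∧ w i < c then dist (γ a) (γ c) else 0) := by
      intro i
      rcases hpoints (i+1) with hwi1 | hwi1
      · rcases hpoints i with hwi | hwi
        · have h0 : dist (γ (w (i+1))) (γ (w i)) = 0 := by rw [hwi, hwi1]; simp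
          rw [h0]
          have h4 : (0:ℝ) ≤ if w (i+1) = c ∧ w i < c then dist (γ a) (γ c) else 0 := by
            split_ifs; exacts [dist_nonneg, le_rfl]
          have h5 := dist_nonneg (x := γ (v (i+1))) (y := γ (v i))
          positivity
        · have haw : w i ≤ a := le_trans hwi (le_max_left _ _)
          have hvi : v i = w i := min_eq_right haw
          have hv1 : v (i+1) = a := by
            show min a (w (i+1)) = a
            rw [hwi1]
            exact min_eq_left hac.le
          rw [if_pos ⟨hwi1, lt_of_le_of_lt hwi hμc⟩, hv1, hvi, hwi1]
          rw [dist_comm (γ c) (γ (w i)), dist_comm (γ a) (γ (w i))]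
          exact dist_triangle _ _ _

      · have haw1 : w (i+1) ≤ a := le_trans hwi1 (le_max_left _ _)
        have hawi : w i ≤ a := le_trans (hwm (Nat.le_succ i)) haw1
        have hne2 : ¬ (w (i+1) = c ∧ w i < c) := by
          rintro ⟨h1, -⟩
          rw [h1] at hwi1
          exact absurd (lt_of_le_of_lt hwi1 hμc) (lt_irrefl c)
        have hvi : v i = w i := min_eq_right hawi
        have hv1 : v (i+1) = w (i+1) := min_eq_right haw1
        rw [if_neg hne2, add_zero, hvi, hv1]
    set C : Finset ℕ := (range (N+1)).filter (fun i => w (i+1) = c ∧ w i < c) with hC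
    have hCcard : C.card ≤ 1 := by
      rw [Finset.card_le_one]
      intro i hi j hj
      rw [hC, Finset.mem_filter] at hi hj
      by_contra hij
      rcases lt_or_gt_of_ne hij with h | h
      · have h6 : w (i+1) ≤ w j := hwm h
        rw [hi.2.1] at h6
        exact absurd (lt_of_le_of_lt h6 hj.2.2) (lt_irrefl c)
      · have h6 : w (j+1) ≤ w i := hwm h
        rw [hj.2.1] at h6
        exact absurd (lt_of_le_of_lt h6 hi.2.2) (lt_irrefl c)
    have hQle : Q ≤ (eVariationOn γ (I ∩ Set.Icc 0 a)).toReal + ε/4 := by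
      have h1 : Q ≤ (∑ i ∈ range (N+1), dist (γ (v (i+1))) (γ (v i)))
          + ∑ i ∈ range (N+1), (if w (i+1) = c ∧ w i < c then dist (γ a) (γ c) else 0) := by
        rw [hQdef, ← Finset.sum_add_distrib]
        exact Finset.sum_le_sum fun i _ => hperterm i
      have h2 : ∑ i ∈ range (N+1), (if w (i+1) = c ∧ w i < c then dist (γ a) (γ c) else 0)
          = ∑ _i ∈ C, dist (γ a) (γ c) := (Finset.sum_filter _ _).symm
      have h3 : ∑ _i ∈ C, dist (γ a) (γ c) ≤ ε/4 := by
        rw [Finset.sum_const, nsmul_eq_mul]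
        calc (C.card : ℝ) * dist (γ a) (γ c) ≤ 1 * (ε/4) :=
            mul_le_mul (by exact_mod_cast hCcard) hdista.le dist_nonneg zero_le_one
          _ = ε/4 := one_mul _
      rw [h2] at h1
      linarith [hR]
    have hadd := eVariationOn.Icc_add_Icc γ ha0 hac.le haI
    have hfc : eVariationOn γ (I ∩ Set.Icc a c) ≠ ⊤ :=
      ne_top_of_le_ne_top hfin (eVariationOn.mono γ Set.inter_subset_left)
    have htr : (eVariationOn γ (I ∩ Set.Icc 0 a)).toReal
        + (eVariationOn γ (I ∩ Set.Icc a c)).toReal = (eVariationOn γ s₁).toReal := by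
      rw [hs₁, ← hadd, ENNReal.toReal_add hfin2 hfc]
    refine ⟨a, hac, ha0, ?_⟩
    linarith
  · have hall : ∀ i < N + 2, w i = c := by
      intro i hi
      have h7 : ¬ w i < c := fun h => hSne ⟨i, Finset.mem_filter.2 ⟨Finset.mem_range.2 hi, h⟩⟩
      exact le_antisymm (hwle i) (not_lt.1 h7)
    have hQ0 : Q = 0 := by
      rw [hQdef]
      refine Finset.sum_eq_zero fun i hi => ?_
      have hi' := Finset.mem_range.1 hi
      rw [hall i (by omega), hall (i+1) (by omega)]
      simp
    refine ⟨0, hc0, le_rfl, ?_⟩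
    show (eVariationOn γ s₁).toReal ≤ ε
    rw [hQ0] at hQ
    linarith

lemma pointwise_small {E' : Type*} [PseudoMetricSpace E'] {γ : ℝ → E'}
    (hcont : ContinuousOn γ (Set.Icc 0 1)) (hfin : eVariationOn γ (Set.Icc 0 1) ≠ ⊤)
    {c : ℝ} (hc : c ∈ Set.Icc (0:ℝ) 1) {ε : ℝ} (hε : 0 < ε) :
    ∃ a b : ℝ, a < c ∧ c < b ∧ (eVariationOn γ (Set.Icc 0 1 ∩ Set.Icc a b)).toReal ≤ ε := by
  classical
  have hhalf : 0 < ε/2 := by linarith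
  -- left piece
  have hleft : ∃ a, a < c ∧ (eVariationOn γ (Set.Icc 0 1 ∩ Set.Icc a c)).toReal ≤ ε/2 := by
    rcases eq_or_lt_of_le hc.1 with h0 | h0
    · refine ⟨c - 1, by linarith, ?_⟩
      have hsub : Set.Icc (0:ℝ) 1 ∩ Set.Icc (c-1) c ⊆ {c} := by
        intro x hx
        have : x = c := le_antisymm hx.2.2 (h0 ▸ hx.1.1)
        simp [this]
      have := eVariationOn.subsingleton γ
        (fun x hx y hy => by rw [hsub hx, hsub hy] : (Set.Icc (0:ℝ) 1 ∩ Set.Icc (c-1) c).Subsingleton)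
      rw [this]
      simp
      positivity
    · obtain ⟨a, ha1, _, ha3⟩ := left_small hcont hfin h0 hc.2 hhalf
      exact ⟨a, ha1, ha3⟩
  have hright : ∃ b, c < b ∧ (eVariationOn γ (Set.Icc 0 1 ∩ Set.Icc c b)).toReal ≤ ε/2 := by
    rcases eq_or_lt_of_le hc.2 with h1 | h1
    · refine ⟨c + 1, by linarith, ?_⟩
      have hsub : Set.Icc (0:ℝ) 1 ∩ Set.Icc c (c+1) ⊆ {c} := by
        intro x hx
        have : x = c := le_antisymm (h1 ▸ hx.1.2) hx.2.1
        simp [this]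
      have := eVariationOn.subsingleton γ
        (fun x hx y hy => by rw [hsub hx, hsub hy] : (Set.Icc (0:ℝ) 1 ∩ Set.Icc c (c+1)).Subsingleton)
      rw [this]
      simp
      positivity
    · obtain ⟨b, hb1, _, hb3⟩ := right_small hcont hfin hc.1 h1 hhalf
      exact ⟨b, hb1, hb3⟩
  obtain ⟨a, hac, ha⟩ := hleft
  obtain ⟨b, hcb, hb⟩ := hright
  refine ⟨a, b, hac, hcb, ?_⟩
  have hadd := eVariationOn.Icc_add_Icc γ hac.le hcb.le hc
  have hf1 : eVariationOn γ (Set.Icc 0 1 ∩ Set.Icc a c) ≠ ⊤ :=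
    ne_top_of_le_ne_top hfin (eVariationOn.mono γ Set.inter_subset_left)
  have hf2 : eVariationOn γ (Set.Icc 0 1 ∩ Set.Icc c b) ≠ ⊤ :=
    ne_top_of_le_ne_top hfin (eVariationOn.mono γ Set.inter_subset_left)
  have : (eVariationOn γ (Set.Icc 0 1 ∩ Set.Icc a b)).toReal
      = (eVariationOn γ (Set.Icc 0 1 ∩ Set.Icc a c)).toReal
        + (eVariationOn γ (Set.Icc 0 1 ∩ Set.Icc c b)).toReal := by
    rw [← hadd, ENNReal.toReal_add hf1 hf2]
  linarith

lemma uniform_small {E' : Type*} [PseudoMetricSpace E'] {γ : ℝ → E'}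
    (hcont : ContinuousOn γ (Set.Icc 0 1)) (hfin : eVariationOn γ (Set.Icc 0 1) ≠ ⊤)
    {ε : ℝ} (hε : 0 < ε) :
    ∃ δ > (0:ℝ), ∀ x y : ℝ, x ∈ Set.Icc (0:ℝ) 1 → y ∈ Set.Icc (0:ℝ) 1 → y ≤ x + δ →
      (eVariationOn γ (Set.Icc 0 1 ∩ Set.Icc x y)).toReal ≤ ε := by
  classical
  have H : ∀ c : Set.Icc (0:ℝ) 1, ∃ a b : ℝ, a < (c:ℝ) ∧ (c:ℝ) < b ∧
      (eVariationOn γ (Set.Icc 0 1 ∩ Set.Icc a b)).toReal ≤ ε :=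
    fun c => pointwise_small hcont hfin c.2 hε
  choose a b ha hb hbound using H
  have hopen : ∀ c : Set.Icc (0:ℝ) 1, IsOpen (Set.Ioo (a c) (b c)) := fun c => isOpen_Ioo
  have hcover : Set.Icc (0:ℝ) 1 ⊆ ⋃ c : Set.Icc (0:ℝ) 1, Set.Ioo (a c) (b c) := by
    intro x hx
    exact Set.mem_iUnion.2 ⟨⟨x, hx⟩, ha ⟨x, hx⟩, hb ⟨x, hx⟩⟩
  obtain ⟨δ, hδ0, hlb⟩ := lebesgue_number_lemma_of_metric isCompact_Icc hopen hcover
  refine ⟨δ/2, by linarith, fun x y hx hy hxy => ?_⟩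
  rcases lt_or_ge y x with hyx | hxy'
  · have hempty : Set.Icc x y = ∅ := Set.Icc_eq_empty (not_le.2 hyx)
    have hsub : (Set.Icc (0:ℝ) 1 ∩ Set.Icc x y) = ∅ := by rw [hempty, Set.inter_empty]
    rw [hsub]
    have := eVariationOn.subsingleton γ (Set.subsingleton_empty (α := ℝ))
    rw [this]
    simp
    positivity
  · obtain ⟨c, hc⟩ := hlb x hx
    have hsubball : Set.Icc x y ⊆ Metric.ball x δ := by
      intro z hz
      rw [Metric.mem_ball, Real.dist_eq, abs_of_nonneg (by linarith [hz.1])]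
      have := hz.2
      linarith
    have hsub2 : Set.Icc x y ⊆ Set.Icc (a c) (b c) :=
      (hsubball.trans hc).trans Set.Ioo_subset_Icc_self
    have hmono : eVariationOn γ (Set.Icc 0 1 ∩ Set.Icc x y)
        ≤ eVariationOn γ (Set.Icc 0 1 ∩ Set.Icc (a c) (b c)) :=
      eVariationOn.mono γ (Set.inter_subset_inter_right _ hsub2)
    have hf2 : eVariationOn γ (Set.Icc 0 1 ∩ Set.Icc (a c) (b c)) ≠ ⊤ :=
      ne_top_of_le_ne_top hfin (eVariationOn.mono γ Set.inter_subset_left)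
    exact (ENNReal.toReal_mono hf2 hmono).trans (hbound c)

lemma dyadic_small {E' : Type*} [PseudoMetricSpace E'] {γ : ℝ → E'}
    (hcont : ContinuousOn γ (Set.Icc 0 1)) (hfin : eVariationOn γ (Set.Icc 0 1) ≠ ⊤)
    {ε : ℝ} (hε : 0 < ε) :
    ∃ m₀ : ℕ, ∀ m, m₀ ≤ m → ∀ p : ℕ, p + 1 ≤ 2^m →
      (eVariationOn γ (Set.Icc 0 1 ∩ Set.Icc (ptd m p) (ptd m (p+1)))).toReal ≤ ε := by
  obtain ⟨δ, hδ0, hδ⟩ := uniform_small hcont hfin hε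
  obtain ⟨m₀, hm₀⟩ := pow_unbounded_of_one_lt (1/δ) (one_lt_two (α := ℝ))
  refine ⟨m₀, fun m hm p hp => ?_⟩
  have h2m : (1:ℝ)/δ < 2^m :=
    hm₀.trans_le (pow_le_pow_right₀ one_le_two hm)
  have h2mpos : (0:ℝ) < 2^m := by positivity
  have hmesh : (1:ℝ)/2^m ≤ δ := by
    rw [div_le_iff₀ h2mpos]
    rw [div_lt_iff₀ hδ0] at h2m
    nlinarith
  have hx : ptd m p ∈ Set.Icc (0:ℝ) 1 := by
    constructor
    · unfold ptd; positivity
    · unfold ptd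
      rw [div_le_one h2mpos]
      calc (p : ℝ) ≤ ((2^m : ℕ) : ℝ) := by exact_mod_cast Nat.le_of_succ_le hp
        _ = 2^m := by push_cast; ring
  have hy : ptd m (p+1) ∈ Set.Icc (0:ℝ) 1 := by
    constructor
    · unfold ptd; positivity
    · unfold ptd
      rw [div_le_one h2mpos]
      calc ((p+1 : ℕ) : ℝ) ≤ ((2^m : ℕ) : ℝ) := by exact_mod_cast hp
        _ = 2^m := by push_cast; ring
  refine hδ _ _ hx hy ?_
  unfold ptd
  push_cast
  rw [add_div]
  linarith [hmesh]

lemma ptd_mono (m : ℕ) {x y : ℕ} (h : x ≤ y) : ptd m x ≤ ptd m y := by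
  unfold ptd
  gcongr


lemma ptd_mem (m : ℕ) {x : ℕ} (h : x ≤ 2^m) : ptd m x ∈ Set.Icc (0:ℝ) 1 := by
  unfold ptd
  have h2 : (0:ℝ) < 2^m := by positivity
  constructor
  · positivity
  · rw [div_le_one h2]
    calc (x : ℝ) ≤ ((2^m : ℕ) : ℝ) := by exact_mod_cast h
      _ = 2^m := by push_cast; ring

section main
variable {d : ℕ} (γ : ℝ → PiLp 1 fun _ : Fin d => ℝ) {L : ℝ}

lemma level_sum_le (hfin : eVariationOn γ (Set.Icc 0 1) ≠ ⊤)
    (hVr : (eVariationOn γ (Set.Icc 0 1)).toReal = L) (F : ℕ) :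
    ∑ p ∈ range (2^F), nrm d γ F p ≤ L := by
  set u : ℕ → ℝ := fun i => ptd F (min i (2^F)) with hu
  have hum : Monotone u := fun x y hxy => ptd_mono F (min_le_min hxy le_rfl)
  have hus : ∀ i, u i ∈ Set.Icc (0:ℝ) 1 := fun i => ptd_mem F (min_le_right _ _)
  have h := sum_dist_le γ hum hus (2^F) hfin
  rw [hVr] at h
  refine le_trans (le_of_eq ?_) h
  refine Finset.sum_congr rfl fun i hi => ?_
  have hi' := Finset.mem_range.1 hi
  have h1 : min i (2^F) = i := min_eq_left hi'.le
  have h2 : min (i+1) (2^F) = i + 1 := min_eq_left hi'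
  rw [nrm]
  simp only [hu, h1, h2]

lemma strictmono_sum_le (hL0 : 0 ≤ L) (hfin : eVariationOn γ (Set.Icc 0 1) ≠ ⊤)
    (hVr : (eVariationOn γ (Set.Icc 0 1)).toReal = L) (F k : ℕ) :
    ∑ v ∈ univ.filter (fun v : Fin k → Fin (2^F) => StrictMono v), ∏ i, nrm d γ F (v i)
      ≤ L^k / k.factorial := by
  have hfk : (0:ℝ) < (k.factorial : ℝ) := by exact_mod_cast k.factorial_pos
  rw [le_div_iff₀ hfk]
  have hcomb := comb (k := k) (fun p : Fin (2^F) => nrm d γ F (p:ℕ)) (fun p => dist_nonneg)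
  have hsum : ∑ p : Fin (2^F), nrm d γ F (p:ℕ) = ∑ p ∈ range (2^F), nrm d γ F p :=
    Fin.sum_univ_eq_sum_range _ _
  have hs1 : ∑ p : Fin (2^F), nrm d γ F (p:ℕ) ≤ L := by
    rw [hsum]; exact level_sum_le γ hfin hVr F
  have hpow : (∑ p : Fin (2^F), nrm d γ F (p:ℕ))^k ≤ L^k :=
    pow_le_pow_left₀ (Finset.sum_nonneg fun p _ => dist_nonneg) hs1 k
  calc (∑ v ∈ univ.filter (fun v : Fin k → Fin (2^F) => StrictMono v), ∏ i, nrm d γ F (v i))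
        * k.factorial
      = (k.factorial : ℝ) * ∑ v ∈ univ.filter (fun v : Fin k → Fin (2^F) => StrictMono v),
          ∏ i, nrm d γ F (v i) := mul_comm _ _
    _ ≤ (∑ p : Fin (2^F), nrm d γ F (p:ℕ))^k := hcomb
    _ ≤ L^k := hpow

lemma block_sum_le (hfin : eVariationOn γ (Set.Icc 0 1) ≠ ⊤) (m e : ℕ) {ε : ℝ}
    (hblocks : ∀ p : ℕ, p + 1 ≤ 2^m →
      (eVariationOn γ (Set.Icc 0 1 ∩ Set.Icc (ptd m p) (ptd m (p+1)))).toReal ≤ ε)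
    (x : Fin (2^(m+e))) :
    ∑ y ∈ univ.filter (fun y : Fin (2^(m+e)) => (y:ℕ)/2^e = (x:ℕ)/2^e),
        nrm d γ (m+e) (y:ℕ) ≤ ε := by
  classical
  have h2e : 0 < 2^e := Nat.pow_pos (by norm_num)
  set p : ℕ := (x:ℕ)/2^e with hp
  have hplt : p < 2^m := by
    rw [hp, Nat.div_lt_iff_lt_mul h2e]
    calc (x:ℕ) < 2^(m+e) := x.2
      _ = 2^m * 2^e := pow_add 2 m e
  have hkey : ∑ y ∈ univ.filter (fun y : Fin (2^(m+e)) => (y:ℕ)/2^e = p), nrm d γ (m+e) (y:ℕ)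
      = ∑ q ∈ range (2^e), nrm d γ (m+e) (p*2^e + q) := by
    refine Finset.sum_nbij' (i := fun y => (y:ℕ) % 2^e)
      (j := fun q => (⟨p*2^e + (q % 2^e), ?_⟩ : Fin (2^(m+e)))) ?_ ?_ ?_ ?_ ?_
    · calc p*2^e + (q % 2^e) < p*2^e + 2^e := Nat.add_lt_add_left (Nat.mod_lt _ h2e) _
        _ = (p+1)*2^e := by ring
        _ ≤ 2^m * 2^e := Nat.mul_le_mul_right _ hplt
        _ = 2^(m+e) := (pow_add 2 m e).symm
    · intro y hy
      rw [Finset.mem_filter] at hy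
      exact Finset.mem_range.2 (Nat.mod_lt _ h2e)
    · intro q hq
      rw [Finset.mem_filter]
      refine ⟨mem_univ _, ?_⟩
      show (p*2^e + (q % 2^e))/2^e = p
      rw [mul_comm, Nat.mul_add_div h2e, Nat.div_eq_of_lt (Nat.mod_lt _ h2e), add_zero]
    · intro y hy
      rw [Finset.mem_filter] at hy
      apply Fin.ext
      show p*2^e + (((y:ℕ) % 2^e) % 2^e) = (y:ℕ)
      rw [Nat.mod_eq_of_lt (Nat.mod_lt _ h2e)]
      conv_rhs => rw [← Nat.div_add_mod (y:ℕ) (2^e)]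
      rw [hy.2, mul_comm]
    · intro q hq
      have hq' := Finset.mem_range.1 hq
      show (p*2^e + (q % 2^e)) % 2^e = q
      rw [Nat.mod_eq_of_lt hq', mul_comm, Nat.mul_add_mod, Nat.mod_eq_of_lt hq']
    · intro y hy
      rw [Finset.mem_filter] at hy
      have : p*2^e + ((y:ℕ) % 2^e) = (y:ℕ) := by
        conv_rhs => rw [← Nat.div_add_mod (y:ℕ) (2^e)]
        rw [← hy.2, mul_comm]
      rw [this]
  rw [hkey]
  set s : Set ℝ := Set.Icc 0 1 ∩ Set.Icc (ptd m p) (ptd m (p+1)) with hs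
  have hfin2 : eVariationOn γ s ≠ ⊤ :=
    ne_top_of_le_ne_top hfin (eVariationOn.mono γ Set.inter_subset_left)
  set u : ℕ → ℝ := fun i => ptd (m+e) (p*2^e + min i (2^e)) with hu
  have hum : Monotone u := fun a b hab => ptd_mono _ (Nat.add_le_add_left (min_le_min hab le_rfl) _)
  have hmemq : ∀ q, q ≤ 2^e → ptd (m+e) (p*2^e + q) ∈ s := by
    intro q hq
    have hub : p*2^e + q ≤ 2^(m+e) := by
      calc p*2^e + q ≤ p*2^e + 2^e := Nat.add_le_add_left hq _
        _ = (p+1)*2^e := by ring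
        _ ≤ 2^m * 2^e := Nat.mul_le_mul_right _ hplt
        _ = 2^(m+e) := (pow_add 2 m e).symm
    refine ⟨ptd_mem _ hub, ?_, ?_⟩
    · rw [← ptd_mul m e p]
      exact ptd_mono _ (Nat.le_add_right _ _)
    · rw [← ptd_mul m e (p+1)]
      apply ptd_mono
      calc p*2^e + q ≤ p*2^e + 2^e := Nat.add_le_add_left hq _
        _ = (p+1)*2^e := by ring
  have hus : ∀ i, u i ∈ s := fun i => hmemq _ (min_le_right _ _)
  have h := sum_dist_le γ hum hus (2^e) hfin2
  have heq : ∑ i ∈ range (2^e), dist (γ (u (i+1))) (γ (u i))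
      = ∑ q ∈ range (2^e), nrm d γ (m+e) (p*2^e+q) := by
    refine Finset.sum_congr rfl fun i hi => ?_
    have hi' := Finset.mem_range.1 hi
    have h1 : min i (2^e) = i := min_eq_left hi'.le
    have h2 : min (i+1) (2^e) = i+1 := min_eq_left hi'
    simp only [hu, h1, h2, nrm]
    have h3 : p*2^e + (i+1) = (p*2^e + i) + 1 := by ring
    rw [h3]
  rw [← heq]
  exact h.trans (hblocks p hplt)

end main

lemma sm_small {α : Type*} [Preorder α] {n : ℕ} (hn : n ≤ 1) (f : Fin n → α) : StrictMono f := by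
  intro a b hab
  exfalso
  have ha := a.2
  have hb := b.2
  have h2 : (a:ℕ) < (b:ℕ) := hab
  omega

lemma diff_bound {d : ℕ} (γ : ℝ → PiLp 1 fun _ : Fin d => ℝ) {L : ℝ} (hL0 : 0 ≤ L)
    (hfin : eVariationOn γ (Set.Icc 0 1) ≠ ⊤)
    (hVr : (eVariationOn γ (Set.Icc 0 1)).toReal = L) (n m e : ℕ) {ε : ℝ} (hε : 0 ≤ ε)
    (hblocks : ∀ p : ℕ, p + 1 ≤ 2^m →
      (eVariationOn γ (Set.Icc 0 1 ∩ Set.Icc (ptd m p) (ptd m (p+1)))).toReal ≤ ε) :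
    ∑ w : Fin n → Fin d, |dyadicSigSum d γ 0 1 w (m+e) - dyadicSigSum d γ 0 1 w m|
      ≤ ((n-1 : ℕ) : ℝ) * ε * (L^(n-1) / ((n-1).factorial : ℝ)) := by
  classical
  have h1 : ∑ w : Fin n → Fin d, |dyadicSigSum d γ 0 1 w (m+e) - dyadicSigSum d γ 0 1 w m|
      = ∑ w : Fin n → Fin d, |∑ u ∈ univ.filter (fun u : Fin n → Fin (2^(m+e)) =>
            StrictMono u ∧ ¬ StrictMono (fun i => (u i : ℕ) / 2^e)),
          ∏ i, (γ (ptd (m+e) ((u i : ℕ)+1)) (w i) - γ (ptd (m+e) (u i)) (w i))| :=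
    Finset.sum_congr rfl fun w _ => by rw [diff_eq]
  rw [h1]
  refine (abs_sum_words_le d γ n (m+e) _).trans ?_
  match n with
  | 0 =>
    have hempty : (univ.filter (fun u : Fin 0 → Fin (2^(m+e)) =>
        StrictMono u ∧ ¬ StrictMono (fun i => (u i : ℕ) / 2^e))) = ∅ := by
      refine Finset.filter_eq_empty_iff.2 fun u _ => ?_
      rintro ⟨-, hns⟩
      exact hns (sm_small (by norm_num) _)
    rw [hempty, Finset.sum_empty]
    positivity
  | 1 =>
    have hempty : (univ.filter (fun u : Fin 1 → Fin (2^(m+e)) =>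
        StrictMono u ∧ ¬ StrictMono (fun i => (u i : ℕ) / 2^e))) = ∅ := by
      refine Finset.filter_eq_empty_iff.2 fun u _ => ?_
      rintro ⟨-, hns⟩
      exact hns (sm_small (by norm_num) _)
    rw [hempty, Finset.sum_empty]
    positivity
  | (k+2) =>
    have hmono : Monotone (fun y : Fin (2^(m+e)) => (y:ℕ)/2^e) :=
      fun y y' h => Nat.div_le_div_right h
    have hb := bad_sum_le (fun y : Fin (2^(m+e)) => nrm d γ (m+e) (y:ℕ))
      (fun p => dist_nonneg) (fun y : Fin (2^(m+e)) => (y:ℕ)/2^e) hmono (k := k) hε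
      (fun x => block_sum_le γ hfin m e hblocks x)
    refine hb.trans ?_
    have hT := strictmono_sum_le γ hL0 hfin hVr (m+e) (k+1)
    have hnn : (0:ℝ) ≤ (k+1) * ε := by positivity
    calc ((k:ℝ)+1) * ε * ∑ v ∈ univ.filter (fun v : Fin (k+1) → Fin (2^(m+e)) => StrictMono v),
          ∏ i, nrm d γ (m+e) (v i)
        ≤ ((k:ℝ)+1) * ε * (L^(k+1) / ((k+1).factorial : ℝ)) :=
          mul_le_mul_of_nonneg_left hT hnn
      _ = ((k+2-1 : ℕ) : ℝ) * ε * (L^(k+2-1) / ((k+2-1).factorial : ℝ)) := by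
          norm_num


/-- The factorial decay of the signature: for a continuous path of bounded variation of
`ℓ¹`-length `L`, the degree-`n` signature term satisfies `‖X^n(γ)‖ ≤ L^n/n!` in the
projective tensor norm. -/
theorem signature_factorial_decay (d : ℕ) (γ : ℝ → PiLp 1 fun _ : Fin d => ℝ)
    (L : ℝ) (hL0 : 0 ≤ L)
    (hcont : ContinuousOn γ (Set.Icc 0 1))
    (hL : eVariationOn γ (Set.Icc 0 1) = ENNReal.ofReal L) (n : ℕ) :
    ‖sig d γ 0 1 n‖ ≤ L ^ n / n.factorial := by
  classical
  have hfin : eVariationOn γ (Set.Icc 0 1) ≠ ⊤ := by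
    rw [hL]; exact ENNReal.ofReal_ne_top
  have hVr : (eVariationOn γ (Set.Icc 0 1)).toReal = L := by
    rw [hL, ENNReal.toReal_ofReal hL0]
  have hTot : ∀ m : ℕ, ∑ w : Fin n → Fin d, |dyadicSigSum d γ 0 1 w m| ≤ L^n / n.factorial := by
    intro m
    have h1 : ∑ w : Fin n → Fin d, |dyadicSigSum d γ 0 1 w m|
        = ∑ w : Fin n → Fin d, |∑ j ∈ univ.filter (fun j : Fin n → Fin (2^m) => StrictMono j),
            ∏ i, (γ (ptd m ((j i : ℕ)+1)) (w i) - γ (ptd m (j i)) (w i))| :=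
      Finset.sum_congr rfl fun w _ => by rw [dyadicSigSum_eq]
    rw [h1]
    refine (abs_sum_words_le d γ n m _).trans ?_
    exact strictmono_sum_le γ hL0 hfin hVr m n
  have hcauchy : ∀ w : Fin n → Fin d, CauchySeq (fun m => dyadicSigSum d γ 0 1 w m) := by
    intro w
    rw [Metric.cauchySeq_iff']
    intro ε' hε'
    set A : ℝ := ((n-1 : ℕ) : ℝ) * (L^(n-1) / ((n-1).factorial : ℝ)) with hA
    have hA0 : 0 ≤ A := by
      apply mul_nonneg (Nat.cast_nonneg _)
      exact div_nonneg (pow_nonneg hL0 _) (Nat.cast_nonneg _)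
    have hCf0 : (0:ℝ) < A + 1 := by linarith
    have hεpos : 0 < ε' / (2*(A+1)) := by positivity
    obtain ⟨m₀, hm₀⟩ := dyadic_small hcont hfin hεpos
    refine ⟨m₀, fun m hm => ?_⟩
    obtain ⟨e, rfl⟩ := Nat.exists_eq_add_of_le hm
    rw [Real.dist_eq]
    have habs : |dyadicSigSum d γ 0 1 w (m₀+e) - dyadicSigSum d γ 0 1 w m₀|
        ≤ ∑ w' : Fin n → Fin d, |dyadicSigSum d γ 0 1 w' (m₀+e) - dyadicSigSum d γ 0 1 w' m₀| :=
      Finset.single_le_sum (f := fun w' : Fin n → Fin d =>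
        |dyadicSigSum d γ 0 1 w' (m₀+e) - dyadicSigSum d γ 0 1 w' m₀|)
        (fun w' _ => abs_nonneg _) (mem_univ w)
    have hdb := diff_bound γ hL0 hfin hVr n m₀ e (ε := ε'/(2*(A+1))) hεpos.le
      (fun p hp => hm₀ m₀ le_rfl p hp)
    have hfinal : ((n-1 : ℕ) : ℝ) * (ε'/(2*(A+1))) * (L^(n-1) / ((n-1).factorial : ℝ)) < ε' := by
      have h2 : ((n-1 : ℕ) : ℝ) * (ε'/(2*(A+1))) * (L^(n-1) / ((n-1).factorial : ℝ))
          = (ε'/(2*(A+1))) * A := by rw [hA]; ring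
      rw [h2]
      have h3 : (ε'/(2*(A+1))) * A ≤ (ε'/(2*(A+1))) * (A+1) :=
        mul_le_mul_of_nonneg_left (by linarith) hεpos.le
      have h4 : (ε'/(2*(A+1))) * (A+1) = ε'/2 := by field_simp
      linarith
    exact lt_of_le_of_lt (habs.trans hdb) hfinal
  have hconv : ∀ w : Fin n → Fin d, ∃ c : ℝ,
      Filter.Tendsto (fun m => dyadicSigSum d γ 0 1 w m) Filter.atTop (nhds c) :=
    fun w => cauchySeq_tendsto_of_complete (hcauchy w)
  choose cw hcw using hconv
  have hsig : ∀ w : Fin n → Fin d, sigCoeff d γ 0 1 w = cw w := fun w => (hcw w).limUnder_eq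
  have hnorm : ‖sig d γ 0 1 n‖ = ∑ w : Fin n → Fin d, |cw w| := by
    rw [norm_l1 (sig d γ 0 1 n)]
    exact Finset.sum_congr rfl fun w _ => by
      rw [show sig d γ 0 1 n w = sigCoeff d γ 0 1 w from rfl, hsig w]
  rw [hnorm]
  have hlim : Filter.Tendsto (fun m => ∑ w : Fin n → Fin d, |dyadicSigSum d γ 0 1 w m|)
      Filter.atTop (nhds (∑ w : Fin n → Fin d, |cw w|)) :=
    tendsto_finset_sum _ (fun w _ => (hcw w).abs)
  exact le_of_tendsto hlim (Filter.Eventually.of_forall hTot)
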